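/- Let N ≥ 2, let φ be an A_N-positive primitive automorphism of the free group F_N, let w ∈ F_N, k ≥ 1, and set ψ_0 = i_w ∘ φ^k. Suppose the fixed subgroup of ψ_0 has rank at least 2, i.e. there exist x, y ∈ F_N with ψ_0(x) = x, ψ_0(y) = y and x·y ≠ y·x. Then there exist z ∈ F_N and a nontrivial u ∈ F_N such that u is ψ-reduced for the automorphism ψ = i_z ∘ ψ_0 ∘ i_{z^{-1}} (in particular ψ is in the isogredience class of ψ_0). (Unnumbered Lemma of Section 2.2.4 of the paper.) -/

import Mathlib

/-- A word of the free group is pure positive if its reduced word is nonempty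
and all its letters are positive. -/
def PurePos {N : ℕ} (v : FreeGroup (Fin N)) : Prop :=
  v.toWord ≠ [] ∧ ∀ l ∈ v.toWord, l.2 = true

/-- A word of the free group is pure negative if its reduced word is nonempty
and all its letters are negative. -/
def PureNeg {N : ℕ} (v : FreeGroup (Fin N)) : Prop :=
  v.toWord ≠ [] ∧ ∀ l ∈ v.toWord, l.2 = false

/-- An automorphism of the free group is `A_N`-positive if the image of each
generator is pure positive. -/
def IsPositive {N : ℕ} (φ : MulAut (FreeGroup (Fin N))) : Prop :=
  ∀ a : Fin N, PurePos (φ (FreeGroup.of a))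

/-- An `A_N`-positive automorphism is primitive if some power sends each generator
to a word containing every positive letter. -/
def IsPrimitive {N : ℕ} (φ : MulAut (FreeGroup (Fin N))) : Prop :=
  ∃ k : ℕ, 1 ≤ k ∧ ∀ a b : Fin N, (b, true) ∈ ((φ ^ k) (FreeGroup.of a)).toWord

/-- `x * y` is cancellation-free: the reduced word of the product is the
concatenation of the reduced words. -/
def NoCancel {N : ℕ} (x y : FreeGroup (Fin N)) : Prop :=
  (x * y).toWord = x.toWord ++ y.toWord

/-- `x` is a prefix of `v`: `v = x * y` without cancellation. -/
def IsPrefixOf {N : ℕ} (x v : FreeGroup (Fin N)) : Prop :=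
  ∃ y, v = x * y ∧ NoCancel x y

/-- `x` is a suffix of `v`: `v = y * x` without cancellation. -/
def IsSuffixOf {N : ℕ} (x v : FreeGroup (Fin N)) : Prop :=
  ∃ y, v = y * x ∧ NoCancel y x

/-- `u` is `ψ`-reduced: `u` is nontrivial and fixed by `ψ`, cyclically reduced,
its first and last letters have opposite signs, and no nonempty strict prefix
or suffix of `u` is fixed by `ψ`. -/
def PsiReduced {N : ℕ} (ψ : FreeGroup (Fin N) → FreeGroup (Fin N))
    (u : FreeGroup (Fin N)) : Prop :=
  u ≠ 1 ∧ ψ u = u ∧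
  (∀ f l : Fin N × Bool, u.toWord.head? = some f → u.toWord.getLast? = some l →
    l ≠ (f.1, !f.2) ∧ l.2 = !f.2) ∧
  (∀ x, x ≠ 1 → x ≠ u → IsPrefixOf x u → ψ x ≠ x) ∧
  (∀ x, x ≠ 1 → x ≠ u → IsSuffixOf x u → ψ x ≠ x)

set_option linter.unusedSectionVars false
set_option maxHeartbeats 1000000

namespace AuxPsi
open FreeGroup List

variable {α : Type*} [DecidableEq α]

def R (a b : α × Bool) : Prop := b ≠ (a.1, !a.2)

lemma reduce_eq_self_of_chain : ∀ {L : List (α × Bool)}, List.IsChain R L → FreeGroup.reduce L = L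
  | [], _ => rfl
  | [x], _ => rfl
  | x :: y :: t, h => by
    rw [List.isChain_cons_cons] at h
    have ih := reduce_eq_self_of_chain h.2
    rw [FreeGroup.reduce.cons, ih]
    have : ¬ (x.1 = y.1 ∧ x.2 = !y.2) := by
      rintro ⟨h1, h2⟩
      exact h.1 (by ext <;> simp [h1, h2])
    simp [this]

lemma toWord_mk_of_chain {L : List (α × Bool)} (h : List.IsChain R L) :
    (FreeGroup.mk L).toWord = L := by
  rw [FreeGroup.toWord_mk, reduce_eq_self_of_chain h]

lemma not_chain_decomp : ∀ {L : List (α × Bool)}, ¬ List.IsChain R L →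
    ∃ (L1 L2 : List (α × Bool)) (x : α) (b : Bool), L = L1 ++ (x, b) :: (x, !b) :: L2
  | [], h => absurd List.isChain_nil h
  | [x], h => absurd (List.isChain_singleton x) h
  | x :: y :: t, h => by
    rw [List.isChain_cons_cons] at h
    by_cases hxy : R x y
    · have : ¬ List.IsChain R (y :: t) := fun hc => h ⟨hxy, hc⟩
      obtain ⟨L1, L2, a, b, hab⟩ := not_chain_decomp this
      exact ⟨x :: L1, L2, a, b, by rw [hab]; rfl⟩
    · unfold R at hxy
      push_neg at hxy
      exact ⟨[], t, x.1, x.2, by rw [hxy]; simp⟩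

lemma chain_toWord (u : FreeGroup α) : List.IsChain R u.toWord := by
  by_contra h
  obtain ⟨L1, L2, a, b, hab⟩ := not_chain_decomp h
  exact FreeGroup.reduce.not (L₁ := u.toWord) (by rw [u.reduce_toWord, hab])

lemma norm_def (u : FreeGroup α) : u.norm = u.toWord.length := rfl

lemma norm_pos {u : FreeGroup α} (h : u ≠ 1) : 1 ≤ u.norm := by
  rcases Nat.eq_zero_or_pos u.norm with h0 | h1
  · exact absurd (FreeGroup.norm_eq_zero.mp h0) h
  · exact h1

lemma norm_conj_le (c x : FreeGroup α) : x.norm ≤ (c * x * c⁻¹).norm + 2 * c.norm := by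
  have : x = c⁻¹ * (c * x * c⁻¹) * c := by group
  calc x.norm = (c⁻¹ * ((c * x * c⁻¹) * c)).norm := by rw [← mul_assoc, ← this]
    _ ≤ c⁻¹.norm + ((c * x * c⁻¹) * c).norm := FreeGroup.norm_mul_le _ _
    _ ≤ c⁻¹.norm + ((c * x * c⁻¹).norm + c.norm) :=
        Nat.add_le_add_left (FreeGroup.norm_mul_le _ _) _
    _ = (c * x * c⁻¹).norm + 2 * c.norm := by rw [FreeGroup.norm_inv_eq]; ring

variable {N : ℕ}

lemma purePos_mul {x y : FreeGroup (Fin N)} (hx : PurePos x) (hy : PurePos y) :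
    PurePos (x * y) ∧ (x * y).toWord = x.toWord ++ y.toWord := by
  have hch : List.IsChain R (x.toWord ++ y.toWord) := by
    apply List.IsChain.append (chain_toWord x) (chain_toWord y)
    intro a ha b hb
    have ha2 : a.2 = true := hx.2 a (List.mem_of_mem_getLast? ha)
    have hb2 : b.2 = true := hy.2 b (List.mem_of_mem_head? hb)
    intro hc
    rw [hc] at hb2
    simp [ha2] at hb2
  have hxy : x * y = FreeGroup.mk (x.toWord ++ y.toWord) := by
    conv_lhs => rw [← FreeGroup.mk_toWord (x := x), ← FreeGroup.mk_toWord (x := y)]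
    rw [FreeGroup.mul_mk]
  have htw : (x * y).toWord = x.toWord ++ y.toWord := by
    rw [hxy, toWord_mk_of_chain hch]
  refine ⟨⟨by simp [htw, hx.1], ?_⟩, htw⟩
  intro l hl
  rw [htw, List.mem_append] at hl
  exact hl.elim (hx.2 l) (hy.2 l)

lemma purePos_norm_mul {x y : FreeGroup (Fin N)} (hx : PurePos x) (hy : PurePos y) :
    (x * y).norm = x.norm + y.norm := by
  rw [norm_def, (purePos_mul hx hy).2, List.length_append]; rfl

lemma purePos_pow {u : FreeGroup (Fin N)} (hu : PurePos u) :
    ∀ n : ℕ, 1 ≤ n → PurePos (u ^ n) ∧ (u ^ n).norm = n * u.norm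
  | 1, _ => by simpa using hu
  | (n+2), _ => by
    obtain ⟨h1, h2⟩ := purePos_pow hu (n+1) (by omega)
    rw [pow_succ]
    refine ⟨(purePos_mul h1 hu).1, ?_⟩
    rw [purePos_norm_mul h1 hu, h2]; ring

/-- decompose a pure positive word as leading generator times rest -/
lemma purePos_decomp {v : FreeGroup (Fin N)} (hv : PurePos v) :
    ∃ (a : Fin N) (v' : FreeGroup (Fin N)), v = FreeGroup.of a * v' ∧
      v'.toWord = v.toWord.tail ∧ (v' = 1 ∨ PurePos v') := by
  obtain ⟨hne, hall⟩ := hv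
  cases h : v.toWord with
  | nil => exact absurd h hne
  | cons hd t =>
    have hd2 : hd.2 = true := hall hd (by rw [h]; exact List.mem_cons_self)
    have hchain : List.IsChain R (hd :: t) := h ▸ chain_toWord v
    refine ⟨hd.1, FreeGroup.mk t, ?_, ?_, ?_⟩
    · have : v = FreeGroup.mk (hd :: t) := by rw [← h, FreeGroup.mk_toWord]
      rw [this]
      have : FreeGroup.of hd.1 = FreeGroup.mk [hd] := by
        rw [FreeGroup.of]; congr 1; rw [← hd2]
      rw [this, FreeGroup.mul_mk]; rfl
    · exact toWord_mk_of_chain (L := t) hchain.tail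
    · cases t with
      | nil => left; rfl
      | cons b t' =>
        right
        constructor
        · rw [toWord_mk_of_chain (L := b :: t') hchain.tail]; simp
        · intro l hl
          rw [toWord_mk_of_chain (L := b :: t') hchain.tail] at hl
          exact hall l (by rw [h]; exact List.mem_cons_of_mem _ hl)

lemma pos_map (θ : MulAut (FreeGroup (Fin N))) (hθ : IsPositive θ) :
    ∀ (n : ℕ) (v : FreeGroup (Fin N)), v.norm ≤ n → PurePos v →
      PurePos (θ v) ∧ v.norm ≤ (θ v).norm := by
  intro n
  induction n with
  | zero =>
    intro v hn hv
    exfalso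
    apply hv.1
    rw [FreeGroup.norm_eq_zero.mp (Nat.le_zero.mp hn), FreeGroup.toWord_one]
  | succ n ih =>
    intro v hn hv
    obtain ⟨a, v', hva, htail, hv'⟩ := purePos_decomp hv
    have hnv : v.norm = v'.norm + 1 := by
      rw [norm_def, norm_def, htail]
      cases h : v.toWord with
      | nil => exact absurd h hv.1
      | cons hd t => simp
    have hthne : θ (FreeGroup.of a) ≠ 1 := by
      intro h
      exact (hθ a).1 (by rw [h, FreeGroup.toWord_one])
    have hth1 : 1 ≤ (θ (FreeGroup.of a)).norm := norm_pos hthne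
    rw [hva] at hn hnv
    rcases hv' with rfl | hv'
    · rw [hva, mul_one]
      refine ⟨hθ a, ?_⟩
      rw [FreeGroup.norm_of]
      exact hth1
    · have hrec := ih v' (by omega) hv'
      rw [hva, _root_.map_mul]
      have hm := purePos_mul (hθ a) hrec.1
      refine ⟨hm.1, ?_⟩
      rw [purePos_norm_mul (hθ a) hrec.1, hnv]
      omega

lemma pos_map2 (θ : MulAut (FreeGroup (Fin N))) (hθ : IsPositive θ)
    (h2 : ∀ a, 2 ≤ (θ (FreeGroup.of a)).norm) :
    ∀ (n : ℕ) (v : FreeGroup (Fin N)), v.norm ≤ n → PurePos v →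
      2 * v.norm ≤ (θ v).norm := by
  intro n
  induction n with
  | zero =>
    intro v hn hv
    exfalso
    apply hv.1
    rw [FreeGroup.norm_eq_zero.mp (Nat.le_zero.mp hn), FreeGroup.toWord_one]
  | succ n ih =>
    intro v hn hv
    obtain ⟨a, v', hva, htail, hv'⟩ := purePos_decomp hv
    have hnv : v.norm = v'.norm + 1 := by
      rw [norm_def, norm_def, htail]
      cases h : v.toWord with
      | nil => exact absurd h hv.1
      | cons hd t => simp
    rw [hva] at hn hnv
    rcases hv' with rfl | hv'
    · rw [hva, mul_one]
      have := h2 a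
      rw [FreeGroup.norm_of]
      omega
    · have hrec := ih v' (by omega) hv'
      rw [hva, _root_.map_mul]
      rw [purePos_norm_mul (hθ a) (pos_map θ hθ v'.norm v' le_rfl hv').1, hnv]
      have := h2 a
      omega

lemma isPositive_pow {φ : MulAut (FreeGroup (Fin N))} (hpos : IsPositive φ) :
    ∀ m : ℕ, IsPositive (φ ^ m) := by
  intro m
  induction m with
  | zero =>
    intro a
    show PurePos ((1 : MulAut (FreeGroup (Fin N))) (FreeGroup.of a))
    simp only [MulAut.one_apply]
    exact ⟨by rw [FreeGroup.toWord_of]; simp, by rw [FreeGroup.toWord_of]; simp⟩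
  | succ m ih =>
    intro a
    rw [pow_succ, MulAut.mul_apply]
    exact (pos_map (φ ^ m) ih _ _ le_rfl (hpos a)).1


lemma two_le_length_of_two_mem {β : Type*} {l : List β} {x y : β}
    (hx : x ∈ l) (hy : y ∈ l) (hne : x ≠ y) : 2 ≤ l.length := by
  match l with
  | [] => simp at hx
  | [z] =>
    simp at hx hy
    exact absurd (hx.trans hy.symm) hne
  | a :: b :: t => simp

lemma chain_snd_all {β : Type*} : ∀ {l : List (β × Bool)} {a : β × Bool},
    List.IsChain (fun p q : β × Bool => p.2 = q.2) (a :: l) → ∀ x ∈ a :: l, x.2 = a.2 := by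
  intro l
  induction l with
  | nil => intro a _ x hx; simp at hx; rw [hx]
  | cons b t ih =>
    intro a h x hx
    rw [List.isChain_cons_cons] at h
    rcases List.mem_cons.mp hx with rfl | hx'
    · rfl
    · rw [ih h.2 x hx', h.1]

lemma ne_inv_comm {β : Type*} {a b : β × Bool} (h : b ≠ (a.1, !a.2)) : a ≠ (b.1, !b.2) := by
  intro hc
  apply h
  rw [hc]
  simp

end AuxPsi

/-- If the fixed subgroup of `ψ₀ = i_w ∘ φ^k` has rank at least `2` (it contains two
non-commuting elements), then some automorphism `ψ = i_z ∘ ψ₀ ∘ i_{z⁻¹}` in the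
isogredience class of `ψ₀` admits a nontrivial `ψ`-reduced word. -/
theorem exists_psiReduced {N : ℕ} (hN : 2 ≤ N)
    (φ : MulAut (FreeGroup (Fin N))) (hpos : IsPositive φ) (hprim : IsPrimitive φ)
    (w : FreeGroup (Fin N)) (k : ℕ) (hk : 1 ≤ k)
    (ψ₀ : FreeGroup (Fin N) → FreeGroup (Fin N))
    (hψ₀ : ψ₀ = fun x => w⁻¹ * (φ ^ k) x * w)
    (hrank : ∃ x y : FreeGroup (Fin N), ψ₀ x = x ∧ ψ₀ y = y ∧ x * y ≠ y * x) :
    ∃ (z u : FreeGroup (Fin N)), u ≠ 1 ∧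
      PsiReduced (fun x => z⁻¹ * ψ₀ (z * x * z⁻¹) * z) u := by
  classical
  subst hψ₀
  obtain ⟨x0, y0, hx0, hy0, hxy⟩ := hrank
  have hx0ne : x0 ≠ 1 := by rintro rfl; simp at hxy
  simp only [] at hx0
  set P : ℕ → Prop := fun n => ∃ z u : FreeGroup (Fin N), u ≠ 1 ∧
      w⁻¹ * (φ ^ k) (z * u * z⁻¹) * w = z * u * z⁻¹ ∧ u.norm = n with hP
  have hPex : ∃ n, P n := by
    refine ⟨x0.norm, 1, x0, hx0ne, ?_, rfl⟩
    simpa using hx0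
  set n := Nat.find hPex with hn
  obtain ⟨z, u, hu1, hufix, hun⟩ := Nat.find_spec hPex
  rw [← hn] at hun
  have hmin : ∀ m, m < n → ¬ P m := fun m hm => Nat.find_min hPex hm
  have hnpos : 1 ≤ n := by
    have := AuxPsi.norm_pos hu1
    omega
  -- Step 1: no conjugately-fixed element is pure positive
  have contra : ∀ (z' u' : FreeGroup (Fin N)), u' ≠ 1 →
      w⁻¹ * (φ ^ k) (z' * u' * z'⁻¹) * w = z' * u' * z'⁻¹ → ¬ PurePos u' := by
    intro z' u' hne hfix hpp
    set c := ((φ ^ k) z')⁻¹ * w * z' with hc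
    have hcu : (φ ^ k) u' = c * u' * c⁻¹ := by
      have h1 : (φ ^ k) (z' * u' * z'⁻¹) = (φ ^ k) z' * (φ ^ k) u' * ((φ ^ k) z')⁻¹ := by
        rw [_root_.map_mul, _root_.map_mul, map_inv]
      rw [h1] at hfix
      calc (φ ^ k) u'
          = ((φ ^ k) z')⁻¹ * (w * (w⁻¹ * ((φ ^ k) z' * (φ ^ k) u' * ((φ ^ k) z')⁻¹) * w) * w⁻¹)
            * (φ ^ k) z' := by group
        _ = ((φ ^ k) z')⁻¹ * (w * (z' * u' * z'⁻¹) * w⁻¹) * (φ ^ k) z' := by rw [hfix]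
        _ = c * u' * c⁻¹ := by rw [hc]; group
    have hiter : ∀ m : ℕ, ∃ d, (φ ^ (k * m)) u' = d * u' * d⁻¹ := by
      intro m
      induction m with
      | zero => exact ⟨1, by simp⟩
      | succ m ih =>
        obtain ⟨d, hd⟩ := ih
        refine ⟨(φ ^ k) d * c, ?_⟩
        have hkm : k * (m + 1) = k + k * m := by ring
        rw [hkm, pow_add, MulAut.mul_apply]
        calc (φ ^ k) ((φ ^ (k * m)) u')
            = (φ ^ k) (d * u' * d⁻¹) := by rw [hd]
          _ = (φ ^ k) d * ((φ ^ k) u') * ((φ ^ k) d)⁻¹ := by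
              rw [_root_.map_mul, _root_.map_mul, map_inv]
          _ = (φ ^ k) d * (c * u' * c⁻¹) * ((φ ^ k) d)⁻¹ := by rw [hcu]
          _ = ((φ ^ k) d * c) * u' * ((φ ^ k) d * c)⁻¹ := by group
    obtain ⟨k', hk'1, hk'mem⟩ := hprim
    obtain ⟨d, hd⟩ := hiter k'
    have hθpos : IsPositive (φ ^ (k * k')) := AuxPsi.isPositive_pow hpos _
    have hθ2 : ∀ a : Fin N, 2 ≤ ((φ ^ (k * k')) (FreeGroup.of a)).norm := by
      intro a
      have hkk' : k' ≤ k * k' := Nat.le_mul_of_pos_left k' (by omega)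
      have hsplit : k * k' = (k * k' - k') + k' := by omega
      have happ : (φ ^ (k * k')) (FreeGroup.of a)
          = (φ ^ (k * k' - k')) ((φ ^ k') (FreeGroup.of a)) := by
        conv_lhs => rw [hsplit]
        rw [pow_add, MulAut.mul_apply]
      have hppk' : PurePos ((φ ^ k') (FreeGroup.of a)) := AuxPsi.isPositive_pow hpos k' a
      have h2k' : 2 ≤ ((φ ^ k') (FreeGroup.of a)).norm := by
        have h0 := hk'mem a ⟨0, by omega⟩
        have h1 := hk'mem a ⟨1, by omega⟩
        have hne01 : ((⟨0, by omega⟩ : Fin N), true) ≠ ((⟨1, by omega⟩ : Fin N), true) := by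
          simp [Fin.ext_iff]
        exact AuxPsi.two_le_length_of_two_mem h0 h1 hne01
      have hmono := (AuxPsi.pos_map (φ ^ (k * k' - k'))
        (AuxPsi.isPositive_pow hpos _) _ _ le_rfl hppk').2
      rw [happ]
      omega
    set m := 2 * d.norm + 1 with hm
    obtain ⟨hppm, hnormm⟩ := AuxPsi.purePos_pow hpp m (by omega)
    have hgrow : 2 * (u' ^ m).norm ≤ ((φ ^ (k * k')) (u' ^ m)).norm :=
      AuxPsi.pos_map2 _ hθpos hθ2 _ _ le_rfl hppm
    have hconj : (φ ^ (k * k')) (u' ^ m) = d * u' ^ m * d⁻¹ := by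
      rw [map_pow, hd, conj_pow]
    have hle : ((φ ^ (k * k')) (u' ^ m)).norm ≤ (u' ^ m).norm + 2 * d.norm := by
      rw [hconj]
      calc (d * u' ^ m * d⁻¹).norm ≤ (d * u' ^ m).norm + d⁻¹.norm := FreeGroup.norm_mul_le _ _
        _ ≤ d.norm + (u' ^ m).norm + d⁻¹.norm := by
            have := FreeGroup.norm_mul_le d (u' ^ m); omega
        _ = (u' ^ m).norm + 2 * d.norm := by rw [FreeGroup.norm_inv_eq]; ring
    have hu'1 : 1 ≤ u'.norm := AuxPsi.norm_pos hne
    have hX : m ≤ (u' ^ m).norm := by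
      rw [hnormm]
      exact Nat.le_mul_of_pos_right m hu'1
    omega
  -- Step 2: key minimality facts for any minimal pair
  have key : ∀ z' u' : FreeGroup (Fin N), u' ≠ 1 →
      w⁻¹ * (φ ^ k) (z' * u' * z'⁻¹) * w = z' * u' * z'⁻¹ → u'.norm = n →
      (∀ fl ll : Fin N × Bool, u'.toWord.head? = some fl → u'.toWord.getLast? = some ll →
        ll ≠ (fl.1, !fl.2)) ∧
      (∀ x, x ≠ 1 → x ≠ u' → IsPrefixOf x u' →
        z'⁻¹ * (w⁻¹ * (φ ^ k) (z' * x * z'⁻¹) * w) * z' ≠ x) ∧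
      (∀ x, x ≠ 1 → x ≠ u' → IsSuffixOf x u' →
        z'⁻¹ * (w⁻¹ * (φ ^ k) (z' * x * z'⁻¹) * w) * z' ≠ x) := by
    intro z' u' hne hfix hlen
    refine ⟨?_, ?_, ?_⟩
    · -- cyclically reduced
      intro fl ll hhead hlast heq
      cases hw : u'.toWord with
      | nil => rw [hw] at hhead; simp at hhead
      | cons hd t =>
        rw [hw] at hhead hlast
        have hfl : hd = fl := by simpa using hhead
        subst hfl
        cases t with
        | nil =>
          have h2 : hd = ll := by simpa using hlast
          rw [← h2] at heq
          have := congrArg Prod.snd heq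
          simp at this
        | cons b t' =>
          have htne : (b :: t') ≠ [] := by simp
          have hlast2 : (b :: t').getLast htne = ll := by
            have : (hd :: b :: t').getLast (by simp) = ll := by
              have hsome := List.getLast?_eq_getLast (l := hd :: b :: t') (by simp)
              rw [hsome] at hlast
              exact (Option.some.inj hlast)
            rwa [List.getLast_cons htne] at this
          have hdecomp : (b :: t') = (b :: t').dropLast ++ [ll] := by
            conv_lhs => rw [← List.dropLast_append_getLast htne]
            rw [hlast2]
          have hchain : List.IsChain AuxPsi.R u'.toWord := AuxPsi.chain_toWord u'
          rw [hw] at hchain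
          set a : FreeGroup (Fin N) := FreeGroup.mk [hd] with ha
          set v : FreeGroup (Fin N) := FreeGroup.mk ((b :: t').dropLast) with hv
          have hainv : a⁻¹ = FreeGroup.mk [ll] := by
            rw [ha, FreeGroup.inv_mk]
            congr 1
            rw [heq]
            simp [FreeGroup.invRev]
          have hueq : u' = a * v * a⁻¹ := by
            rw [hainv, ha, hv, FreeGroup.mul_mk, FreeGroup.mul_mk,
              ← FreeGroup.mk_toWord (x := u'), hw]
            congr 1
            conv_lhs => rw [hdecomp]
            simp
          have hveq : v = a⁻¹ * u' * a := by rw [hueq]; group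
          have hv1 : v ≠ 1 := by
            intro h
            rw [h, mul_one] at hueq
            exact hne (by rw [hueq]; group)
          have hvtw : v.toWord = (b :: t').dropLast := by
            rw [hv]
            apply AuxPsi.toWord_mk_of_chain
            exact hchain.tail.prefix (List.dropLast_prefix _)
          have hvnorm : v.norm < n := by
            have h1 : u'.norm = t'.length + 2 := by
              rw [AuxPsi.norm_def, hw]; simp
            have h2 : v.norm = t'.length := by
              rw [AuxPsi.norm_def, hvtw]; simp
            omega
          apply hmin v.norm hvnorm
          refine ⟨z' * a, v, hv1, ?_, rfl⟩
          have : z' * a * v * (z' * a)⁻¹ = z' * u' * z'⁻¹ := by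
            rw [hueq]; group
          rw [mul_assoc z' a v] at this ⊢
          rw [this]
          exact hfix
    · -- no fixed strict prefix
      rintro x hx1 hxu ⟨y, hxy, hnc⟩ hfixx
      have hfx : w⁻¹ * (φ ^ k) (z' * x * z'⁻¹) * w = z' * x * z'⁻¹ := by
        conv_rhs => rw [← hfixx]
        group
      have hy1 : y ≠ 1 := by
        rintro rfl
        rw [mul_one] at hxy
        exact hxu hxy.symm
      have hlxy : u'.norm = x.norm + y.norm := by
        rw [hxy, AuxPsi.norm_def, hnc, List.length_append]; rfl
      have hyeq : z' * y * z'⁻¹ = (z' * x * z'⁻¹)⁻¹ * (z' * u' * z'⁻¹) := by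
        rw [hxy]; group
      have hyfix : w⁻¹ * (φ ^ k) (z' * y * z'⁻¹) * w = z' * y * z'⁻¹ := by
        rw [hyeq, _root_.map_mul, map_inv]
        calc w⁻¹ * (((φ ^ k) (z' * x * z'⁻¹))⁻¹ * (φ ^ k) (z' * u' * z'⁻¹)) * w
            = (w⁻¹ * (φ ^ k) (z' * x * z'⁻¹) * w)⁻¹ * (w⁻¹ * (φ ^ k) (z' * u' * z'⁻¹) * w) := by
              group
          _ = (z' * x * z'⁻¹)⁻¹ * (z' * u' * z'⁻¹) := by rw [hfx, hfix]
      have hxpos : 1 ≤ x.norm := AuxPsi.norm_pos hx1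
      exact hmin y.norm (by omega) ⟨z', y, hy1, hyfix, rfl⟩
    · -- no fixed strict suffix
      rintro x hx1 hxu ⟨y, hxy, hnc⟩ hfixx
      have hfx : w⁻¹ * (φ ^ k) (z' * x * z'⁻¹) * w = z' * x * z'⁻¹ := by
        conv_rhs => rw [← hfixx]
        group
      have hy1 : y ≠ 1 := by
        rintro rfl
        rw [one_mul] at hxy
        exact hxu hxy.symm
      have hlxy : u'.norm = y.norm + x.norm := by
        rw [hxy, AuxPsi.norm_def, hnc, List.length_append]; rfl
      have hyeq : z' * y * z'⁻¹ = (z' * u' * z'⁻¹) * (z' * x * z'⁻¹)⁻¹ := by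
        rw [hxy]; group
      have hyfix : w⁻¹ * (φ ^ k) (z' * y * z'⁻¹) * w = z' * y * z'⁻¹ := by
        rw [hyeq, _root_.map_mul, map_inv]
        calc w⁻¹ * ((φ ^ k) (z' * u' * z'⁻¹) * ((φ ^ k) (z' * x * z'⁻¹))⁻¹) * w
            = (w⁻¹ * (φ ^ k) (z' * u' * z'⁻¹) * w) * (w⁻¹ * (φ ^ k) (z' * x * z'⁻¹) * w)⁻¹ := by
              group
          _ = (z' * u' * z'⁻¹) * (z' * x * z'⁻¹)⁻¹ := by rw [hfx, hfix]
      have hxpos : 1 ≤ x.norm := AuxPsi.norm_pos hx1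
      exact hmin y.norm (by omega) ⟨z', y, hy1, hyfix, rfl⟩
  -- Step 3: find the right rotation
  by_cases hch : List.IsChain (fun p q : Fin N × Bool => p.2 = q.2) u.toWord
  · -- all letters have the same sign: impossible
    exfalso
    cases hw : u.toWord with
    | nil => exact hu1 (FreeGroup.toWord_eq_nil_iff.mp hw)
    | cons hd t =>
      rw [hw] at hch
      have hall := AuxPsi.chain_snd_all hch
      cases hhd : hd.2 with
      | true =>
        refine contra z u hu1 hufix ⟨by rw [hw]; simp, ?_⟩
        intro l hl
        rw [hw] at hl
        rw [hall l hl, hhd]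
      | false =>
        have hufix' : w⁻¹ * (φ ^ k) (z * u⁻¹ * z⁻¹) * w = z * u⁻¹ * z⁻¹ := by
          have : z * u⁻¹ * z⁻¹ = (z * u * z⁻¹)⁻¹ := by group
          rw [this, map_inv]
          calc w⁻¹ * ((φ ^ k) (z * u * z⁻¹))⁻¹ * w
              = (w⁻¹ * (φ ^ k) (z * u * z⁻¹) * w)⁻¹ := by group
            _ = (z * u * z⁻¹)⁻¹ := by rw [hufix]
        refine contra z u⁻¹ (by simp [hu1]) hufix' ⟨?_, ?_⟩
        · rw [FreeGroup.toWord_inv, hw]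
          simp [FreeGroup.invRev]
        · intro l hl
          rw [FreeGroup.toWord_inv] at hl
          simp only [FreeGroup.invRev, List.mem_reverse, List.mem_map] at hl
          obtain ⟨p, hp, rfl⟩ := hl
          rw [hw] at hp
          simp [hall p hp, hhd]
  · -- there is an adjacent sign change: rotate there
    rw [List.isChain_iff_getElem] at hch
    push_neg at hch
    obtain ⟨i, hilt, hsign⟩ := hch
    obtain ⟨hcyc, -, -⟩ := key z u hu1 hufix hun
    set W := u.toWord with hW
    have hWne : W ≠ [] := fun h => hu1 (FreeGroup.toWord_eq_nil_iff.mp h)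
    have hlenW : W.length = n := by rw [hW, ← AuxPsi.norm_def, hun]
    have him : i + 1 < W.length := by omega
    set tk := W.take (i + 1) with htk
    set dr := W.drop (i + 1) with hdr
    have htk_ne : tk ≠ [] := by
      rw [htk]
      simp only [ne_eq, List.take_eq_nil_iff]
      push_neg
      exact ⟨by omega, hWne⟩
    have hdr_ne : dr ≠ [] := by
      rw [hdr]
      simp only [ne_eq, List.drop_eq_nil_iff]
      omega
    have hcW : List.IsChain AuxPsi.R W := AuxPsi.chain_toWord u
    have hctk : List.IsChain AuxPsi.R tk := hcW.prefix (List.take_prefix _ _)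
    have hcdr : List.IsChain AuxPsi.R dr := hcW.suffix (List.drop_suffix _ _)
    -- head and last of W
    have hWhead : W.head? = some (W.head hWne) := List.head?_eq_head hWne
    have hWlast : W.getLast? = some (W.getLast hWne) := List.getLast?_eq_getLast (l := W) hWne
    have hRj : AuxPsi.R (W.getLast hWne) (W.head hWne) :=
      AuxPsi.ne_inv_comm (hcyc (W.head hWne) (W.getLast hWne) hWhead hWlast)
    have hcdt : List.IsChain AuxPsi.R (dr ++ tk) := by
      refine List.IsChain.append hcdr hctk ?_
      intro p hp q hq
      have hpd : dr.getLast? = some (W.getLast hWne) := by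
        rw [hdr, List.getLast?_drop, if_neg (by omega), hWlast]
      have hqd : tk.head? = some (W.head hWne) := by
        rw [htk, List.head?_take, if_neg (by omega), hWhead]
      rw [hpd] at hp
      rw [hqd] at hq
      rw [Option.mem_some_iff] at hp hq
      rw [← hp, ← hq]
      exact hRj
    set x : FreeGroup (Fin N) := FreeGroup.mk tk with hx
    set v : FreeGroup (Fin N) := FreeGroup.mk (dr ++ tk) with hv
    have hvtw : v.toWord = dr ++ tk := by
      rw [hv]; exact AuxPsi.toWord_mk_of_chain hcdt
    have hv1 : v ≠ 1 := by
      intro h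
      rw [h, FreeGroup.toWord_one] at hvtw
      exact hdr_ne (List.append_eq_nil_iff.mp hvtw.symm).1
    have hlensum : tk.length + dr.length = W.length := by
      rw [htk, hdr, ← List.length_append, List.take_append_drop]
    have hvnorm : v.norm = n := by
      rw [AuxPsi.norm_def, hvtw, List.length_append]
      omega
    have hux : u = x * FreeGroup.mk dr := by
      rw [hx, FreeGroup.mul_mk]
      conv_lhs => rw [← FreeGroup.mk_toWord (x := u)]
      congr 1
      rw [← hW, htk, hdr, List.take_append_drop]
    have hvmul : v = FreeGroup.mk dr * x := by
      rw [hv, hx, FreeGroup.mul_mk]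
    have hveq : v = x⁻¹ * u * x := by
      rw [hvmul, hux]; group
    have hvfix : w⁻¹ * (φ ^ k) ((z * x) * v * (z * x)⁻¹) * w = (z * x) * v * (z * x)⁻¹ := by
      have harg : (z * x) * v * (z * x)⁻¹ = z * u * z⁻¹ := by rw [hveq]; group
      rw [harg]
      exact hufix
    obtain ⟨hcyc', hpre', hsuf'⟩ := key (z * x) v hv1 hvfix hvnorm
    have hvhead : v.toWord.head? = some (W[i+1]'him) := by
      rw [hvtw, List.head?_append_of_ne_nil _ hdr_ne, hdr, List.head?_drop,
        List.getElem?_eq_getElem him]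
    have hii : i < W.length := by omega
    have hvlast : v.toWord.getLast? = some (W[i]'hii) := by
      rw [hvtw, List.getLast?_append_of_ne_nil _ htk_ne, htk, List.getLast?_take,
        if_neg (by omega)]
      have : i + 1 - 1 = i := by omega
      rw [this, List.getElem?_eq_getElem hii]
      simp
    have hsign2 : (W[i]'hii).2 ≠ (W[i+1]'him).2 := hsign
    have hsign' : (W[i]'hii).2 = !((W[i+1]'him).2) := by
      rcases Bool.eq_false_or_eq_true (W[i]'hii).2 with h1 | h1 <;>
      rcases Bool.eq_false_or_eq_true ((W[i+1]'him).2) with h2 | h2 <;>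
        first
          | (exact absurd (h1.trans h2.symm) hsign2)
          | (rw [h1, h2]; rfl)
    refine ⟨z * x, v, hv1, hv1, ?_, ?_, hpre', hsuf'⟩
    · show (z * x)⁻¹ * (w⁻¹ * (φ ^ k) ((z * x) * v * (z * x)⁻¹) * w) * (z * x) = v
      rw [hvfix]
      group
    · intro f l hf hl
      rw [hvhead] at hf
      rw [hvlast] at hl
      have hf' : f = W[i+1]'him := (Option.some.inj hf).symm
      have hl' : l = W[i]'hii := (Option.some.inj hl).symm
      subst hf'
      subst hl'
      exact ⟨hcyc' _ _ hvhead hvlast, hsign'⟩
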